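/- The topological closure of the conic hull (set of all finite nonnegative linear combinations) of the curve {(exp(x), 1, x) : x ∈ ℝ} ⊆ ℝ³ equals the exponential cone K_exp. -/

import Mathlib

open Real

/-- The exponential cone
`K_exp = {(x₁,x₂,x₃) : x₂ > 0, x₁ ≥ x₂·exp(x₃/x₂)} ∪ {(x₁,0,x₃) : x₁ ≥ 0, x₃ ≤ 0}`. -/
def Kexp : Set (Fin 3 → ℝ) :=
  {x | 0 < x 1 ∧ x 1 * Real.exp (x 2 / x 1) ≤ x 0} ∪
  {x | x 1 = 0 ∧ 0 ≤ x 0 ∧ x 2 ≤ 0}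

/-- The conic hull of a set `S ⊆ ℝ³`: all finite nonnegative linear combinations of
elements of `S`. -/
def conicHull (S : Set (Fin 3 → ℝ)) : Set (Fin 3 → ℝ) :=
  {p | ∃ (n : ℕ) (c : Fin n → ℝ) (v : Fin n → (Fin 3 → ℝ)),
    (∀ i, 0 ≤ c i) ∧ (∀ i, v i ∈ S) ∧ p = ∑ i, c i • v i}

section Aux
open Filter Topology

noncomputable def E : Set (Fin 3 → ℝ) := conicHull (Set.range fun x : ℝ => ![Real.exp x, 1, x])

lemma zero_mem_E : (0 : Fin 3 → ℝ) ∈ E :=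
  ⟨0, ![], ![], by simp, by simp, by simp⟩
lemma smul_curve_mem {c : ℝ} (hc : 0 ≤ c) (a : ℝ) :
    c • ![Real.exp a, 1, a] ∈ E :=
  ⟨1, fun _ => c, fun _ => ![Real.exp a, 1, a], fun _ => hc, fun _ => ⟨a, rfl⟩, by simp⟩
lemma add_mem_E {S : Set (Fin 3 → ℝ)} {p q : Fin 3 → ℝ} (hp : p ∈ conicHull S) (hq : q ∈ conicHull S) :
    p + q ∈ conicHull S := by
  obtain ⟨n, c, v, hc, hv, rfl⟩ := hp
  obtain ⟨m, d, w, hd, hw, rfl⟩ := hq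
  refine ⟨n + m, Fin.append c d, Fin.append v w, ?_, ?_, ?_⟩
  · intro i
    refine i.addCases (fun j => ?_) (fun j => ?_)
    · simpa [Fin.append_left] using hc j
    · simpa [Fin.append_right] using hd j
  · intro i
    refine i.addCases (fun j => ?_) (fun j => ?_)
    · simpa [Fin.append_left] using hv j
    · simpa [Fin.append_right] using hw j
  · rw [Fin.sum_univ_add]
    simp [Fin.append_left, Fin.append_right]
lemma halfspace_mem {p : Fin 3 → ℝ}
    (hp : p ∈ conicHull (Set.range fun x : ℝ => ![Real.exp x, 1, x])) (r : ℝ) :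
    p 2 ≤ p 1 * (r - 1) + p 0 * Real.exp (-r) := by
  obtain ⟨n, c, v, hc, hv, rfl⟩ := hp
  have hv' : ∀ i, ∃ a : ℝ, v i = ![Real.exp a, 1, a] := fun i => (hv i).imp fun a h => h.symm
  choose a ha using hv'
  simp only [Finset.sum_apply, Pi.smul_apply, smul_eq_mul, Finset.sum_mul, ← Finset.sum_add_distrib]
  refine Finset.sum_le_sum fun i _ => ?_
  rw [ha i]
  have hval : ![Real.exp (a i), 1, a i] 2 = a i := rfl
  have hval0 : ![Real.exp (a i), 1, a i] 0 = Real.exp (a i) := rfl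
  have hval1 : ![Real.exp (a i), 1, a i] 1 = 1 := rfl
  rw [hval, hval0, hval1]
  have key : a i - r + 1 ≤ Real.exp (a i - r) := Real.add_one_le_exp _
  have : Real.exp (a i - r) = Real.exp (a i) * Real.exp (-r) := by
    rw [← Real.exp_add]; ring_nf
  nlinarith [hc i, Real.exp_pos (a i)]
lemma mem_Kexp_of_halfspaces {x : Fin 3 → ℝ}
    (h : ∀ r : ℝ, x 2 ≤ x 1 * (r - 1) + x 0 * Real.exp (-r)) : x ∈ Kexp := by
  rcases lt_trichotomy (x 1) 0 with h1 | h1 | h1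
  · -- contradiction
    exfalso
    set M := max (x 0) 0 with hM
    have hM0 : 0 ≤ M := le_max_right _ _
    set r := max 1 ((x 2 - M) / x 1 + 2) with hr
    have hr0 : 0 ≤ r := le_trans zero_le_one (le_max_left _ _)
    have h2 : Real.exp (-r) ≤ 1 := Real.exp_le_one_iff.2 (by linarith)
    have h3 : x 0 * Real.exp (-r) ≤ M := by
      rcases le_or_gt (x 0) 0 with h4 | h4
      · nlinarith [Real.exp_pos (-r)]
      · calc x 0 * Real.exp (-r) ≤ x 0 * 1 := by nlinarith
          _ ≤ M := by rw [mul_one, hM]; exact le_max_left _ _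
    have h5 : (x 2 - M) / x 1 + 2 ≤ r := le_max_right _ _
    have hx1ne : x 1 ≠ 0 := ne_of_lt h1
    have h6 : x 1 * (r - 1) ≤ x 2 - M + x 1 := by
      have hle : (x 2 - M) / x 1 + 1 ≤ r - 1 := by linarith
      have h7 : x 1 * (r - 1) ≤ x 1 * ((x 2 - M) / x 1 + 1) :=
        mul_le_mul_of_nonpos_left hle (le_of_lt h1)
      have h8 : x 1 * ((x 2 - M) / x 1 + 1) = (x 2 - M) + x 1 := by
        field_simp
      linarith
    have := h r
    linarith
  · -- x 1 = 0
    right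
    refine ⟨h1, ?_, ?_⟩
    · by_contra h0
      push_neg at h0
      -- x 0 < 0; then x 2 ≤ x 0 * exp (-r) < 0, and choose r making rhs < x 2
      have hx2 : x 2 < 0 := by
        have := h 0
        simp [h1] at this
        nlinarith [this]
      set r := -(Real.log (x 2 / x 0) + 1) with hr
      have hq : (0:ℝ) < x 2 / x 0 := div_pos_of_neg_of_neg hx2 h0
      have he : Real.exp (-r) = (x 2 / x 0) * Real.exp 1 := by
        rw [hr, neg_neg, Real.exp_add, Real.exp_log hq]
      have := h r
      rw [h1] at this
      have hcon : x 0 * Real.exp (-r) < x 2 := by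
        rw [he]
        have hx0ne : x 0 ≠ 0 := ne_of_lt h0
        have : x 0 * (x 2 / x 0 * Real.exp 1) = x 2 * Real.exp 1 := by
          rw [show x 0 * (x 2 / x 0 * Real.exp 1) = (x 0 / x 0) * (x 2 * Real.exp 1) by ring,
            div_self hx0ne, one_mul]
        rw [this]
        nlinarith [Real.exp_one_gt_d9]
      linarith
    · by_contra h0
      push_neg at h0
      have hx00 : 0 ≤ x 0 := by
        have := h 0
        simp [h1] at this
        nlinarith [this]
      rcases eq_or_lt_of_le hx00 with h4 | h4
      · have := h 0
        rw [h1, ← h4] at this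
        simp at this
        linarith
      · set r := -Real.log (x 2 / x 0) + 1 with hr
        have hq : (0:ℝ) < x 2 / x 0 := div_pos h0 h4
        have he : Real.exp (-r) = (x 2 / x 0) * Real.exp (-1) := by
          rw [hr, neg_add, neg_neg, Real.exp_add, Real.exp_log hq]
        have := h r
        rw [h1] at this
        have hcon : x 0 * Real.exp (-r) < x 2 := by
          rw [he]
          have h9 : x 0 * (x 2 / x 0 * Real.exp (-1)) = x 2 * Real.exp (-1) := by field_simp
          rw [h9]
          nlinarith [Real.exp_lt_one_iff.2 (show (-1:ℝ) < 0 by norm_num), Real.exp_pos (-1)]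
        linarith
  · -- x 1 > 0
    left
    refine ⟨h1, ?_⟩
    have hx0 : 0 < x 0 := by
      by_contra h0
      push_neg at h0
      set r := min 0 (x 2 / x 1) with hr
      have := h r
      have h2 : x 0 * Real.exp (-r) ≤ 0 := by nlinarith [Real.exp_pos (-r)]
      have h3 : x 1 * r ≤ x 2 := by
        have : r ≤ x 2 / x 1 := min_le_right _ _
        calc x 1 * r ≤ x 1 * (x 2 / x 1) := by nlinarith
          _ = x 2 := by field_simp
      nlinarith
    have key := h (Real.log (x 0 / x 1))
    have hq : (0:ℝ) < x 0 / x 1 := div_pos hx0 h1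
    rw [Real.exp_neg, Real.exp_log hq] at key
    have h2 : x 0 * (x 0 / x 1)⁻¹ = x 1 := by field_simp
    rw [h2] at key
    -- key : x 2 ≤ x 1 * (log (x0/x1) - 1) + x 1, i.e. x 2 ≤ x 1 * log (x0/x1)
    have h3 : x 2 / x 1 ≤ Real.log (x 0 / x 1) := by
      rw [div_le_iff₀ h1] at *
      nlinarith
    calc x 1 * Real.exp (x 2 / x 1) ≤ x 1 * (x 0 / x 1) := by
          have := Real.exp_le_exp.2 h3
          rw [Real.exp_log hq] at this
          nlinarith
      _ = x 0 := by field_simp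
lemma ray_mem_closure {d : ℝ} (hd : 0 ≤ d) : (![d, 0, 0] : Fin 3 → ℝ) ∈ closure E := by
  rcases eq_or_lt_of_le hd with h | h
  · have : (![d,0,0] : Fin 3 → ℝ) = 0 := by ext i; fin_cases i <;> simp [← h]
    rw [this]; exact subset_closure zero_mem_E
  · -- approximate by t • (exp (log (d/t)), 1, log (d/t)) = (d, t, t * log (d/t))
    have : Tendsto (fun t : ℝ => (t • ![Real.exp (Real.log (d/t)), 1, Real.log (d/t)] : Fin 3 → ℝ))
        (𝓝[>] 0) (𝓝 ![d, 0, 0]) := by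
      rw [tendsto_pi_nhds]
      intro i
      fin_cases i
      · -- first coord : t * exp (log (d/t)) = d for t > 0
        show Tendsto (fun t : ℝ => t * Real.exp (Real.log (d/t))) (𝓝[>] 0) (𝓝 d)
        have heq : ∀ᶠ t in 𝓝[>] (0:ℝ), t * Real.exp (Real.log (d/t)) = d := by
          filter_upwards [self_mem_nhdsWithin] with t ht
          have ht' : (0:ℝ) < t := ht
          rw [Real.exp_log (div_pos h ht'), mul_comm, div_mul_cancel₀ _ (ne_of_gt ht')]
        rw [tendsto_congr' heq]
        exact tendsto_const_nhds
      · show Tendsto (fun t : ℝ => t * 1) (𝓝[>] 0) (𝓝 0)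
        simp only [mul_one]; exact tendsto_id.mono_left nhdsWithin_le_nhds
      · -- t * log (d/t) = t * log d - t * log t → 0
        show Tendsto (fun t : ℝ => t * Real.log (d/t)) (𝓝[>] 0) (𝓝 0)
        have heq : ∀ᶠ t in 𝓝[>] (0:ℝ),
            t * Real.log (d/t) = t * Real.log d - t * Real.log t := by
          filter_upwards [self_mem_nhdsWithin] with t ht
          have ht' : (0:ℝ) < t := ht
          rw [Real.log_div (ne_of_gt h) (ne_of_gt ht')]
          ring
        rw [tendsto_congr' heq]
        have h1 : Tendsto (fun t : ℝ => t * Real.log d - t * Real.log t) (𝓝 0) (𝓝 0) := by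
          have hm := Real.continuous_mul_log.tendsto 0
          have h2 : Tendsto (fun t : ℝ => t * Real.log d) (𝓝 0) (𝓝 0) := by
            have h3 : Tendsto (fun t : ℝ => t * Real.log d) (𝓝 0) (𝓝 (0 * Real.log d)) := (continuous_id.mul (continuous_const : Continuous fun _ : ℝ => Real.log d)).tendsto 0; simpa using h3
          have := h2.sub (by simpa using hm)
          simpa using this
        exact h1.mono_left nhdsWithin_le_nhds
    refine mem_closure_of_tendsto this ?_
    filter_upwards [self_mem_nhdsWithin] with t ht
    exact smul_curve_mem (le_of_lt ht) _
lemma down_mem_closure {z : ℝ} (hz : z ≤ 0) : (![0, 0, z] : Fin 3 → ℝ) ∈ closure E := by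
  have : Tendsto (fun t : ℝ => (t • ![Real.exp (z/t), 1, z/t] : Fin 3 → ℝ))
      (𝓝[>] 0) (𝓝 ![0, 0, z]) := by
    rw [tendsto_pi_nhds]
    intro i
    fin_cases i
    · show Tendsto (fun t : ℝ => t * Real.exp (z/t)) (𝓝[>] 0) (𝓝 0)
      have hb : ∀ᶠ t in 𝓝[>] (0:ℝ), t * Real.exp (z/t) ∈ Set.Icc 0 t := by
        filter_upwards [self_mem_nhdsWithin] with t ht
        have ht' : (0:ℝ) < t := ht
        constructor
        · positivity
        · have hz' : z / t ≤ 0 := div_nonpos_of_nonpos_of_nonneg hz (le_of_lt ht')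
          nlinarith [Real.exp_le_one_iff.2 hz', Real.exp_pos (z/t)]
      refine tendsto_of_tendsto_of_tendsto_of_le_of_le' tendsto_const_nhds
        (tendsto_id.mono_left nhdsWithin_le_nhds) ?_ ?_
      · filter_upwards [hb] with t ht using ht.1
      · filter_upwards [hb] with t ht using ht.2
    · show Tendsto (fun t : ℝ => t * 1) (𝓝[>] 0) (𝓝 0)
      simp only [mul_one]; exact tendsto_id.mono_left nhdsWithin_le_nhds
    · show Tendsto (fun t : ℝ => t * (z/t)) (𝓝[>] 0) (𝓝 z)
      have heq : ∀ᶠ t in 𝓝[>] (0:ℝ), t * (z/t) = z := by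
        filter_upwards [self_mem_nhdsWithin] with t ht
        have ht' : (0:ℝ) < t := ht
        rw [mul_div_assoc']
        rw [mul_comm, mul_div_assoc, div_self (ne_of_gt ht'), mul_one]
      rw [tendsto_congr' heq]
      exact tendsto_const_nhds
  refine mem_closure_of_tendsto this ?_
  filter_upwards [self_mem_nhdsWithin] with t ht
  exact smul_curve_mem (le_of_lt ht) _

end Aux

open Filter Topology in
/-- The closure of the conic hull of the curve `{(exp x, 1, x) : x ∈ ℝ}` is the
exponential cone. -/
theorem closure_conicHull_expCurve_eq_Kexp :
    closure (conicHull (Set.range fun x : ℝ => ![Real.exp x, 1, x])) = Kexp := by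
  rw [show conicHull (Set.range fun x : ℝ => ![Real.exp x, 1, x]) = E from rfl]
  apply Set.Subset.antisymm
  · -- closure E ⊆ Kexp
    have hsub : E ⊆ {x : Fin 3 → ℝ | ∀ r : ℝ, x 2 ≤ x 1 * (r - 1) + x 0 * Real.exp (-r)} :=
      fun p hp r => halfspace_mem hp r
    have hcl : IsClosed {x : Fin 3 → ℝ | ∀ r : ℝ, x 2 ≤ x 1 * (r - 1) + x 0 * Real.exp (-r)} := by
      have heq : {x : Fin 3 → ℝ | ∀ r : ℝ, x 2 ≤ x 1 * (r - 1) + x 0 * Real.exp (-r)}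
          = ⋂ r : ℝ, {x : Fin 3 → ℝ | x 2 ≤ x 1 * (r - 1) + x 0 * Real.exp (-r)} := by
        ext y; simp
      rw [heq]
      refine isClosed_iInter fun r => isClosed_le (continuous_apply 2) ?_
      exact (((continuous_apply 1).mul continuous_const).add
        ((continuous_apply 0).mul continuous_const))
    intro x hx
    exact mem_Kexp_of_halfspaces fun r => closure_minimal hsub hcl hx r
  · intro x hx
    rcases hx with ⟨h1, h2⟩ | ⟨h1, h2, h3⟩
    · have hx1 : x = x 1 • ![Real.exp (x 2 / x 1), 1, x 2 / x 1]
          + ![x 0 - x 1 * Real.exp (x 2 / x 1), 0, 0] := by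
        ext i
        fin_cases i
        · show x 0 = x 1 * Real.exp (x 2 / x 1) + (x 0 - x 1 * Real.exp (x 2 / x 1))
          ring
        · show x 1 = x 1 * 1 + 0
          ring
        · show x 2 = x 1 * (x 2 / x 1) + 0
          rw [mul_comm, div_mul_cancel₀ _ (ne_of_gt h1), add_zero]
      rw [hx1]
      exact map_mem_closure₂ continuous_add
        (subset_closure (smul_curve_mem h1.le _))
        (ray_mem_closure (by linarith))
        (fun a ha b hb => add_mem_E ha hb)
    · have hx1 : x = ![x 0, 0, 0] + ![0, 0, x 2] := by
        ext i
        fin_cases i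
        · show x 0 = x 0 + 0; ring
        · show x 1 = 0 + 0; rw [h1, add_zero]
        · show x 2 = 0 + x 2; ring
      rw [hx1]
      exact map_mem_closure₂ continuous_add
        (ray_mem_closure h2)
        (down_mem_closure h3)
        (fun a ha b hb => add_mem_E ha hb)
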